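/- The cover pebbling number of the d-dimensional hypercube Q^d is 3^d. -/

import Mathlib

open SimpleGraph

variable {V : Type*}

/-- A single pebbling move: remove two pebbles from `u`, add one to a neighbor `v`. -/
def PebblingMove (G : SimpleGraph V) (c c' : V → ℕ) : Prop :=
  ∃ u v, G.Adj u v ∧ 2 ≤ c u ∧
    c' u = c u - 2 ∧ c' v = c v + 1 ∧ ∀ w, w ≠ u → w ≠ v → c' w = c w

/-- `c'` is reachable from `c` by a sequence of pebbling moves. -/
def PebblingReach (G : SimpleGraph V) (c c' : V → ℕ) : Prop :=
  Relation.ReflTransGen (PebblingMove G) c c'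

/-- A configuration is `t`-fold `r`-solvable if some sequence of pebbling moves
places at least `t` pebbles on `r`. -/
def PebblingSolvable (G : SimpleGraph V) (c : V → ℕ) (r : V) (t : ℕ) : Prop :=
  ∃ c', PebblingReach G c c' ∧ t ≤ c' r

variable [Fintype V]

/-- The set of sizes `m` such that every configuration of size `m` is
`t`-fold `r`-solvable for every target `r`. -/
def pebblingSet (G : SimpleGraph V) (t : ℕ) : Set ℕ :=
  {m | ∀ c : V → ℕ, (∑ v, c v) = m → ∀ r : V, PebblingSolvable G c r t}

/-- The `t`-fold pebbling number, as an extended natural number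
(`⊤` when no bound exists, e.g. for disconnected graphs). -/
noncomputable def pebblingNumber (G : SimpleGraph V) (t : ℕ) : ℕ∞ :=
  sInf ((↑) '' pebblingSet G t)

/-- A configuration is cover-solvable if pebbling moves can reach a configuration
with at least one pebble on every vertex. -/
def IsCoverSolvable (G : SimpleGraph V) (c : V → ℕ) : Prop :=
  ∃ c', PebblingReach G c c' ∧ ∀ v : V, 1 ≤ c' v

/-- The cover pebbling number. -/
noncomputable def coverPebblingNumber (G : SimpleGraph V) : ℕ∞ :=
  sInf ((↑) '' {m : ℕ | ∀ c : V → ℕ, (∑ v, c v) = m → IsCoverSolvable G c})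

/-- The optimal pebbling number: the least size of a single configuration that is
`r`-solvable for every vertex `r`. -/
noncomputable def optimalPebblingNumber (G : SimpleGraph V) : ℕ∞ :=
  sInf ((↑) '' {m : ℕ | ∃ c : V → ℕ, (∑ v, c v) = m ∧ ∀ r : V, PebblingSolvable G c r 1})

/-- The `d`-dimensional hypercube graph. -/
def cubeGraph (d : ℕ) : SimpleGraph (Fin d → Bool) :=
  SimpleGraph.fromRel (fun x y => (Finset.univ.filter fun i => x i ≠ y i).card = 1)

namespace CubeAux

open Finset

/-- Hamming distance. -/
def hamm {n : ℕ} (x y : Fin n → Bool) : ℕ := (univ.filter fun i => x i ≠ y i).card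

lemma hamm_self {n : ℕ} (x : Fin n → Bool) : hamm x x = 0 := by simp [hamm]

lemma hamm_comm {n : ℕ} (x y : Fin n → Bool) : hamm x y = hamm y x := by
  unfold hamm; congr 1; ext i; simp [ne_comm]

lemma adj_iff {n : ℕ} {x y : Fin n → Bool} :
    (cubeGraph n).Adj x y ↔ hamm x y = 1 := by
  rw [cubeGraph, SimpleGraph.fromRel_adj]
  constructor
  · rintro ⟨hne, h | h⟩
    · exact h
    · rw [hamm_comm]; exact h
  · intro h
    have hne : x ≠ y := by
      rintro rfl
      simp [hamm] at h
    exact ⟨hne, Or.inl h⟩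

lemma hamm_cons {n : ℕ} (b b' : Bool) (x y : Fin n → Bool) :
    hamm (Fin.cons b x) (Fin.cons b' y) = (if b = b' then 0 else 1) + hamm x y := by
  unfold hamm
  rw [card_filter, card_filter, Fin.sum_univ_succ]
  simp [Fin.cons_zero, Fin.cons_succ]

lemma adj_cons {n : ℕ} {x y : Fin n → Bool} (b : Bool)
    (h : (cubeGraph n).Adj x y) : (cubeGraph (n+1)).Adj (Fin.cons b x) (Fin.cons b y) := by
  rw [adj_iff] at h ⊢
  rw [hamm_cons, h]; simp

lemma adj_cross {n : ℕ} (x : Fin n → Bool) {b b' : Bool} (h : b ≠ b') :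
    (cubeGraph (n+1)).Adj (Fin.cons b x) (Fin.cons b' x) := by
  rw [adj_iff, hamm_cons, hamm_self]
  simp [h]

/-- one-point sum exchange -/
lemma sum_point {α : Type*} [Fintype α] [DecidableEq α] (f f' : α → ℕ) (x : α)
    (h : ∀ y, y ≠ x → f' y = f y) :
    (∑ y, f' y) + f x = (∑ y, f y) + f' x := by
  have h1 : ∑ y ∈ univ.erase x, f' y = ∑ y ∈ univ.erase x, f y :=
    Finset.sum_congr rfl fun y hy => h y (Finset.mem_erase.mp hy).1
  have h2 := Finset.add_sum_erase univ f (Finset.mem_univ x)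
  have h3 := Finset.add_sum_erase univ f' (Finset.mem_univ x)
  omega

/-- two-point sum exchange -/
lemma sum_two_point {α : Type*} [Fintype α] [DecidableEq α] (f f' : α → ℕ) (x y : α)
    (hxy : x ≠ y) (h : ∀ z, z ≠ x → z ≠ y → f' z = f z) :
    (∑ z, f' z) + f x + f y = (∑ z, f z) + f' x + f' y := by
  have hy : y ∈ univ.erase x := Finset.mem_erase.mpr ⟨(Ne.symm hxy), Finset.mem_univ y⟩
  have h1 : ∑ z ∈ (univ.erase x).erase y, f' z = ∑ z ∈ (univ.erase x).erase y, f z := by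
    refine Finset.sum_congr rfl fun z hz => ?_
    have hz1 := Finset.mem_erase.mp hz
    have hz2 := Finset.mem_erase.mp hz1.2
    exact h z hz2.1 hz1.1
  have h2 := Finset.add_sum_erase univ f (Finset.mem_univ x)
  have h3 := Finset.add_sum_erase univ f' (Finset.mem_univ x)
  have h4 := Finset.add_sum_erase (univ.erase x) f hy
  have h5 := Finset.add_sum_erase (univ.erase x) f' hy
  omega

/-! ### Lower bound: weight function -/

def wt {n : ℕ} (v : Fin n → Bool) : ℕ := ∏ i, (if v i then 2 else 1)

lemma wt_pos {n : ℕ} (v : Fin n → Bool) : 1 ≤ wt v := by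
  unfold wt
  refine Finset.one_le_prod' fun i _ => ?_
  by_cases h : v i <;> simp [h]

lemma wt_cons {n : ℕ} (b : Bool) (x : Fin n → Bool) :
    wt (Fin.cons b x) = (if b then 2 else 1) * wt x := by
  unfold wt
  rw [Fin.prod_univ_succ]
  simp [Fin.cons_zero, Fin.cons_succ]

lemma wt_le_of_adj {n : ℕ} {u v : Fin n → Bool} (h : (cubeGraph n).Adj u v) :
    wt v ≤ 2 * wt u := by
  rw [adj_iff] at h
  obtain ⟨i₀, hi₀⟩ := Finset.card_eq_one.mp h
  have hoff : ∀ i, i ≠ i₀ → u i = v i := by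
    intro i hi
    by_contra hne
    have : i ∈ ({i₀} : Finset (Fin n)) := by
      rw [← hi₀]; simp [hne]
    simp at this; exact hi this
  have hprod : ∏ i ∈ univ.erase i₀, (if v i then 2 else 1)
      = ∏ i ∈ univ.erase i₀, (if u i then 2 else 1) := by
    refine Finset.prod_congr rfl fun i hi => ?_
    rw [hoff i (Finset.mem_erase.mp hi).1]
  have hv : wt v = (if v i₀ then 2 else 1) * ∏ i ∈ univ.erase i₀, (if v i then 2 else 1) :=
    (Finset.mul_prod_erase univ _ (Finset.mem_univ i₀)).symm
  have hu : wt u = (if u i₀ then 2 else 1) * ∏ i ∈ univ.erase i₀, (if u i then 2 else 1) :=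
    (Finset.mul_prod_erase univ _ (Finset.mem_univ i₀)).symm
  rw [hv, hu, hprod]
  set P := ∏ i ∈ univ.erase i₀, (if u i then 2 else 1)
  have h1 : (if v i₀ then 2 else 1) ≤ 2 := by by_cases h : v i₀ <;> simp [h]
  have h2 : 1 ≤ (if u i₀ then 2 else 1) := by by_cases h : u i₀ <;> simp [h]
  calc (if v i₀ then 2 else 1) * P ≤ 2 * P := Nat.mul_le_mul_right P h1
    _ ≤ 2 * ((if u i₀ then 2 else 1) * P) := by
        rw [← Nat.mul_assoc]
        exact Nat.mul_le_mul_right P (by omega)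

def W {n : ℕ} (c : (Fin n → Bool) → ℕ) : ℕ := ∑ v, c v * wt v

lemma W_move {n : ℕ} {c c' : (Fin n → Bool) → ℕ}
    (h : PebblingMove (cubeGraph n) c c') : W c' ≤ W c := by
  obtain ⟨u, v, hadj, h2, hu, hv, hw⟩ := h
  have hne : u ≠ v := hadj.ne
  have E := sum_two_point (fun z => c z * wt z) (fun z => c' z * wt z) u v hne
    (fun z hz1 hz2 => by
      show c' z * wt z = c z * wt z
      rw [hw z hz1 hz2])
  rw [hu, hv] at E
  have hQ : wt v ≤ 2 * wt u := wt_le_of_adj hadj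
  have hsubmul : (c u - 2) * wt u = c u * wt u - 2 * wt u := Nat.sub_mul _ _ _
  have haddmul : (c v + 1) * wt v = c v * wt v + wt v := by ring
  rw [hsubmul, haddmul] at E
  have hle : 2 * wt u ≤ c u * wt u := Nat.mul_le_mul_right _ h2
  unfold W
  omega

lemma W_reach {n : ℕ} {c c' : (Fin n → Bool) → ℕ}
    (h : PebblingReach (cubeGraph n) c c') : W c' ≤ W c := by
  induction h with
  | refl => exact le_refl _
  | tail _ hstep ih => exact le_trans (W_move hstep) ih

lemma sum_cons_split {n : ℕ} (g : (Fin (n+1) → Bool) → ℕ) :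
    (∑ f, g f) = (∑ x : Fin n → Bool, g (Fin.cons false x))
      + (∑ x : Fin n → Bool, g (Fin.cons true x)) := by
  rw [← (Fin.consEquiv (fun _ : Fin (n+1) => Bool)).sum_comp g]
  rw [Fintype.sum_prod_type]
  rw [Fintype.sum_bool]
  simp [Fin.consEquiv]
  ring

lemma sum_wt (n : ℕ) : (∑ v : Fin n → Bool, wt v) = 3 ^ n := by
  induction n with
  | zero => simp [wt]
  | succ n ih =>
    rw [sum_cons_split (fun v => wt v)]
    have h1 : ∀ x : Fin n → Bool, wt (Fin.cons false x) = wt x := by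
      intro x; rw [wt_cons]; simp
    have h2 : ∀ x : Fin n → Bool, wt (Fin.cons true x) = 2 * wt x := by
      intro x; rw [wt_cons]; simp
    simp only [h1, h2]
    rw [← Finset.mul_sum, ih]
    ring

lemma not_solvable {n m : ℕ} (hm : m < 3 ^ n) :
    ¬ IsCoverSolvable (cubeGraph n) (fun v => if v = (fun _ => false) then m else 0) := by
  rintro ⟨c', hreach, hcov⟩
  have h1 : W (fun v : Fin n → Bool => if v = (fun _ => false) then m else 0) = m := by
    unfold W
    rw [Finset.sum_eq_single (fun _ : Fin n => false)]
    · simp [wt]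
    · intro b _ hb; simp [hb]
    · intro h; exact absurd (Finset.mem_univ _) h
  have h2 : 3 ^ n ≤ W c' := by
    rw [← sum_wt n]
    unfold W
    exact Finset.sum_le_sum fun v _ => le_mul_of_one_le_left (Nat.zero_le _) (hcov v)
  have h3 := W_reach hreach
  omega

/-! ### Upper bound machinery -/

def halfSum {n : ℕ} (c : (Fin (n+1) → Bool) → ℕ) (b : Bool) : ℕ :=
  ∑ x : Fin n → Bool, c (Fin.cons b x)

lemma cons_ne_cons_of_ne {n : ℕ} {b : Bool} {x y : Fin n → Bool} (h : x ≠ y) :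
    (Fin.cons b x : Fin (n+1) → Bool) ≠ Fin.cons b y := by
  intro he
  exact h (by
    have := congrArg Fin.tail he
    rwa [Fin.tail_cons, Fin.tail_cons] at this)

lemma cons_ne_cons_side {n : ℕ} {b b' : Bool} (h : b ≠ b') (x y : Fin n → Bool) :
    (Fin.cons b x : Fin (n+1) → Bool) ≠ Fin.cons b' y := by
  intro he
  exact h (by
    have := congrArg (fun f => f 0) he
    simpa using this)

lemma exists_two {n : ℕ} (c : (Fin (n+1) → Bool) → ℕ) (b : Bool)
    (h : 2 ^ n < halfSum c b) : ∃ x, 2 ≤ c (Fin.cons b x) := by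
  by_contra hc
  push_neg at hc
  have : halfSum c b ≤ ∑ _x : Fin n → Bool, 1 :=
    Finset.sum_le_sum fun x _ => Nat.lt_succ_iff.mp (hc x)
  simp [Fintype.card_fun] at this
  omega

/-- Transfer one pebble across the cut, at the cost of two. -/
lemma transfer {n : ℕ} (c : (Fin (n+1) → Bool) → ℕ) (b : Bool) (x : Fin n → Bool)
    (h2 : 2 ≤ c (Fin.cons b x)) :
    ∃ c', PebblingMove (cubeGraph (n+1)) c c' ∧
      halfSum c' b + 2 = halfSum c b ∧ halfSum c' (!b) = halfSum c (!b) + 1 := by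
  set u : Fin (n+1) → Bool := Fin.cons b x with hu
  set v : Fin (n+1) → Bool := Fin.cons (!b) x with hv
  have huv : u ≠ v := cons_ne_cons_side (by simp) x x
  set c' : (Fin (n+1) → Bool) → ℕ :=
    Function.update (Function.update c u (c u - 2)) v (c v + 1) with hc'
  have hcu : c' u = c u - 2 := by
    rw [hc', Function.update_of_ne huv, Function.update_self]
  have hcv : c' v = c v + 1 := by
    rw [hc', Function.update_self]
  have hcw : ∀ w, w ≠ u → w ≠ v → c' w = c w := by
    intro w hw1 hw2
    rw [hc', Function.update_of_ne hw2, Function.update_of_ne hw1]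
  refine ⟨c', ⟨u, v, adj_cross x (by simp), h2, hcu, hcv, hcw⟩, ?_, ?_⟩
  · have hp := sum_point (fun y => c (Fin.cons b y)) (fun y => c' (Fin.cons b y)) x
      (fun y hy => hcw _ (cons_ne_cons_of_ne hy) (cons_ne_cons_side (by simp) y x))
    rw [← hu, hcu] at hp
    have h2' : 2 ≤ c u := h2
    unfold halfSum
    omega
  · have hp := sum_point (fun y => c (Fin.cons (!b) y)) (fun y => c' (Fin.cons (!b) y)) x
      (fun y hy => hcw _ (cons_ne_cons_side (by simp) y x) (cons_ne_cons_of_ne hy))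
    rw [← hv, hcv] at hp
    unfold halfSum
    omega

lemma balance {n : ℕ} (t : ℕ) :
    ∀ (c : (Fin (n+1) → Bool) → ℕ) (b : Bool),
    3 ^ n + 2 * t ≤ halfSum c b → 3 ^ n ≤ halfSum c (!b) + t →
    ∃ c', PebblingReach (cubeGraph (n+1)) c c' ∧
      3 ^ n ≤ halfSum c' b ∧ 3 ^ n ≤ halfSum c' (!b) := by
  induction t with
  | zero =>
    intro c b h1 h2
    exact ⟨c, Relation.ReflTransGen.refl, by omega, by omega⟩
  | succ t ih =>
    intro c b h1 h2
    by_cases hb : 3 ^ n ≤ halfSum c (!b)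
    · exact ⟨c, Relation.ReflTransGen.refl, by omega, hb⟩
    · have hgt : 2 ^ n < halfSum c b := by
        have := Nat.pow_le_pow_left (by norm_num : 2 ≤ 3) n
        omega
      obtain ⟨x, hx⟩ := exists_two c b hgt
      obtain ⟨c', hmove, hs1, hs2⟩ := transfer c b x hx
      obtain ⟨c'', hreach, hg1, hg2⟩ := ih c' b (by omega) (by omega)
      exact ⟨c'', Relation.ReflTransGen.head hmove hreach, hg1, hg2⟩

/-- Lift a configuration change on one half. -/
def liftCfg {n : ℕ} (b : Bool) (c : (Fin (n+1) → Bool) → ℕ) (e : (Fin n → Bool) → ℕ) :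
    (Fin (n+1) → Bool) → ℕ :=
  fun f => if f 0 = b then e (Fin.tail f) else c f

lemma liftCfg_cons_same {n : ℕ} (b : Bool) (c : (Fin (n+1) → Bool) → ℕ)
    (e : (Fin n → Bool) → ℕ) (x : Fin n → Bool) :
    liftCfg b c e (Fin.cons b x) = e x := by
  simp [liftCfg, Fin.cons_zero, Fin.tail_cons]

lemma liftCfg_cons_other {n : ℕ} {b b' : Bool} (h : b' ≠ b) (c : (Fin (n+1) → Bool) → ℕ)
    (e : (Fin n → Bool) → ℕ) (x : Fin n → Bool) :
    liftCfg b c e (Fin.cons b' x) = c (Fin.cons b' x) := by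
  simp [liftCfg, Fin.cons_zero, h]

lemma reach_lift {n : ℕ} (b : Bool) (c : (Fin (n+1) → Bool) → ℕ)
    (e' : (Fin n → Bool) → ℕ)
    (h : PebblingReach (cubeGraph n) (fun x => c (Fin.cons b x)) e') :
    PebblingReach (cubeGraph (n+1)) c (liftCfg b c e') := by
  have key : ∀ e₁ e₂ : (Fin n → Bool) → ℕ, PebblingMove (cubeGraph n) e₁ e₂ →
      PebblingMove (cubeGraph (n+1)) (liftCfg b c e₁) (liftCfg b c e₂) := by
    rintro e₁ e₂ ⟨u, v, hadj, h2, hu, hv, hw⟩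
    refine ⟨Fin.cons b u, Fin.cons b v, adj_cons b hadj, ?_, ?_, ?_, ?_⟩
    · rwa [liftCfg_cons_same]
    · rw [liftCfg_cons_same, liftCfg_cons_same, hu]
    · rw [liftCfg_cons_same, liftCfg_cons_same, hv]
    · intro w hw1 hw2
      by_cases h0 : w 0 = b
      · have hweq : w = Fin.cons b (Fin.tail w) := by
          rw [← h0]; exact (Fin.cons_self_tail w).symm
        have ht1 : Fin.tail w ≠ u := by
          intro he; apply hw1; rw [hweq, he]
        have ht2 : Fin.tail w ≠ v := by
          intro he; apply hw2; rw [hweq, he]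
        simp only [liftCfg, h0, if_true]
        exact hw _ ht1 ht2
      · simp only [liftCfg, h0, if_false]
  have base : liftCfg b c (fun x => c (Fin.cons b x)) = c := by
    funext f
    by_cases h0 : f 0 = b
    · simp only [liftCfg, h0, if_true]
      rw [← h0, Fin.cons_self_tail]
    · simp only [liftCfg, h0, if_false]
  have : Relation.ReflTransGen (PebblingMove (cubeGraph (n + 1))) (liftCfg b c (fun x => c (Fin.cons b x))) (liftCfg b c e') :=
    Relation.ReflTransGen.lift (liftCfg b c) key _ _ h
  rwa [base] at this

/-- Main upper bound. -/
lemma cover_of_le : ∀ (n : ℕ) (c : (Fin n → Bool) → ℕ),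
    3 ^ n ≤ ∑ v, c v → IsCoverSolvable (cubeGraph n) c := by
  intro n
  induction n with
  | zero =>
    intro c hc
    refine ⟨c, Relation.ReflTransGen.refl, fun v => ?_⟩
    have huniq : ∀ w : Fin 0 → Bool, w = v := fun w => Subsingleton.elim w v
    have : (∑ w, c w) = c v := by
      rw [show (Finset.univ : Finset (Fin 0 → Bool)) = {v} from
        Finset.eq_singleton_iff_unique_mem.mpr ⟨Finset.mem_univ v, fun w _ => huniq w⟩]
      simp
    omega
  | succ n ih =>
    intro c hc
    rw [sum_cons_split c] at hc
    -- First balance the two halves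
    have hmain : ∃ c₀, PebblingReach (cubeGraph (n+1)) c c₀ ∧
        3 ^ n ≤ halfSum c₀ false ∧ 3 ^ n ≤ halfSum c₀ true := by
      by_cases hf : 3 ^ n ≤ halfSum c false
      · by_cases ht : 3 ^ n ≤ halfSum c true
        · exact ⟨c, Relation.ReflTransGen.refl, hf, ht⟩
        · -- true side deficient; source is false side
          push_neg at ht
          have hsum : halfSum c false + halfSum c true = _ := rfl
          obtain ⟨c', hr, hg1, hg2⟩ := balance (3 ^ n - halfSum c true) c false
            (by
              have h3 : (3:ℕ) ^ (n+1) = 3 * 3 ^ n := by ring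
              simp only [halfSum] at *
              omega)
            (by simp only [Bool.not_false]; omega)
          exact ⟨c', hr, hg1, by simpa using hg2⟩
      · -- false side deficient; source is true side
        push_neg at hf
        obtain ⟨c', hr, hg1, hg2⟩ := balance (3 ^ n - halfSum c false) c true
          (by
            have h3 : (3:ℕ) ^ (n+1) = 3 * 3 ^ n := by ring
            simp only [halfSum] at *
            omega)
          (by simp only [Bool.not_true]; omega)
        exact ⟨c', hr, by simpa using hg2, hg1⟩
    obtain ⟨c₀, hr0, hf0, ht0⟩ := hmain
    -- Cover the false half
    obtain ⟨e₀, hre0, hcov0⟩ := ih (fun x => c₀ (Fin.cons false x)) hf0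
    set c₁ := liftCfg false c₀ e₀ with hc₁
    have hr1 : PebblingReach (cubeGraph (n+1)) c₀ c₁ := reach_lift false c₀ e₀ hre0
    -- Cover the true half
    have htrue1 : (∑ x : Fin n → Bool, c₁ (Fin.cons true x)) = halfSum c₀ true := by
      unfold halfSum
      refine Finset.sum_congr rfl fun x _ => ?_
      exact liftCfg_cons_other (by simp) c₀ e₀ x
    obtain ⟨e₁, hre1, hcov1⟩ := ih (fun x => c₁ (Fin.cons true x)) (by rw [htrue1]; exact ht0)
    set c₂ := liftCfg true c₁ e₁ with hc₂
    have hr2 : PebblingReach (cubeGraph (n+1)) c₁ c₂ := reach_lift true c₁ e₁ hre1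
    refine ⟨c₂, (hr0.trans hr1).trans hr2, fun f => ?_⟩
    by_cases h0 : f 0 = true
    · have : c₂ f = e₁ (Fin.tail f) := by simp [hc₂, liftCfg, h0]
      rw [this]; exact hcov1 _
    · have hff : f 0 = false := by simpa using h0
      have h1 : c₂ f = c₁ f := by simp [hc₂, liftCfg, h0]
      have h2 : c₁ f = e₀ (Fin.tail f) := by simp [hc₁, liftCfg, hff]
      rw [h1, h2]; exact hcov0 _

end CubeAux

/-- The cover pebbling number of the `d`-dimensional hypercube is `3^d`. -/
theorem coverPebblingNumber_cubeGraph (d : ℕ) :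
    coverPebblingNumber (cubeGraph d) = ((3 ^ d : ℕ) : ℕ∞) := by
  unfold coverPebblingNumber
  apply le_antisymm
  · exact sInf_le ⟨3 ^ d, fun c hc => CubeAux.cover_of_le d c hc.ge, rfl⟩
  · refine le_sInf ?_
    rintro a ⟨m, hm, rfl⟩
    rw [Nat.cast_le]
    by_contra h
    push_neg at h
    exact CubeAux.not_solvable h
      (hm _ (by simp [Finset.sum_ite_eq' Finset.univ (fun _ : Fin d => false) (fun _ => m)]))
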